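/- Let p be a prime, n ≥ 1 with p not dividing n, and A a row-stochastic n×n matrix over F_p = ZMod p. Then the following are equivalent: (i) the iteration x(t+1) = A x(t) achieves average consensus, i.e., for every x(0) ∈ F_p^n there exists T such that A^t x(0) = ((n : F_p)⁻¹ · ∑_i x(0)_i) • 𝟙 for all t ≥ T; (ii) the characteristic polynomial of A over F_p equals X^{n−1}·(X − 1) and A is column-stochastic, i.e., 𝟙ᵀ A = 𝟙ᵀ (every column of A sums to 1). -/

import Mathlib

open Matrix Polynomial

private lemma toLin'_pow' {p n : ℕ} [Fact p.Prime]
    (A : Matrix (Fin n) (Fin n) (ZMod p)) (k : ℕ) :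
    Matrix.toLin' (A ^ k) = (Matrix.toLin' A) ^ k := by
  induction k with
  | zero => simp [Matrix.toLin'_one, Module.End.one_eq_id]
  | succ k ih => rw [pow_succ, pow_succ, Matrix.toLin'_mul, ih]; rfl

private lemma charpoly_toLin'' {p n : ℕ} [Fact p.Prime]
    (A : Matrix (Fin n) (Fin n) (ZMod p)) :
    A.charpoly = (Matrix.toLin' A).charpoly := by
  have := (Matrix.toLin' A).charpoly_toMatrix (Pi.basisFun (ZMod p) (Fin n))
  rw [LinearMap.toMatrix_eq_toMatrix', LinearMap.toMatrix'_toLin'] at this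
  exact this

private lemma maxGen_eq_ker' {p n : ℕ} [Fact p.Prime]
    (A : Matrix (Fin n) (Fin n) (ZMod p)) (T : ℕ)
    (hstab : ∀ k ≥ T, A ^ k = A ^ T) :
    (show Module.End (ZMod p) (Fin n → ZMod p) from Matrix.toLin' A).maxGenEigenspace 0
      = LinearMap.ker (Matrix.toLin' (A ^ T)) := by
  ext x
  rw [LinearMap.mem_ker, toLin'_pow']
  simp only [Module.End.mem_maxGenEigenspace, zero_smul, sub_zero]
  constructor
  · rintro ⟨k, hk⟩
    rcases le_total k T with h | h
    · obtain ⟨m, rfl⟩ := Nat.exists_eq_add_of_le h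
      rw [add_comm, pow_add, Module.End.mul_apply, hk, map_zero]
    · rw [← toLin'_pow', ← hstab k h, toLin'_pow']; exact hk
  · intro hx; exact ⟨T, hx⟩

private lemma pow_mulVec_one' {p n : ℕ} [Fact p.Prime]
    {A : Matrix (Fin n) (Fin n) (ZMod p)}
    (hA : A *ᵥ (1 : Fin n → ZMod p) = 1) (k : ℕ) :
    A ^ k *ᵥ (1 : Fin n → ZMod p) = 1 := by
  induction k with
  | zero => simp
  | succ k ih => rw [pow_succ, ← Matrix.mulVec_mulVec, hA, ih]

private lemma one_vecMul_pow' {p n : ℕ} [Fact p.Prime]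
    {A : Matrix (Fin n) (Fin n) (ZMod p)}
    (hcol : (1 : Fin n → ZMod p) ᵥ* A = 1) (k : ℕ) :
    (1 : Fin n → ZMod p) ᵥ* (A ^ k) = 1 := by
  induction k with
  | zero => simp
  | succ k ih => rw [pow_succ, ← Matrix.vecMul_vecMul, ih, hcol]

/-- Finite-field average consensus: for a row-stochastic matrix `A` over
`ZMod p` with `p ∤ n`, the iteration achieves average consensus (every
trajectory reaches `((n)⁻¹ * ∑ᵢ x0 i) • 𝟙` in finite time) if and only if the
characteristic polynomial of `A` is `X^(n-1) * (X-1)` and `A` is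
column-stochastic (`𝟙 ᵥ* A = 𝟙`). -/
theorem finiteField_average_consensus_iff
    (p n : ℕ) [Fact p.Prime] (hn : 1 ≤ n) (hpn : ¬ p ∣ n)
    (A : Matrix (Fin n) (Fin n) (ZMod p))
    (hA : A *ᵥ (1 : Fin n → ZMod p) = 1) :
    (∀ x0 : Fin n → ZMod p, ∃ T : ℕ, ∀ t ≥ T,
      (A ^ t) *ᵥ x0 = ((n : ZMod p)⁻¹ * ∑ i, x0 i) • (1 : Fin n → ZMod p)) ↔
    (A.charpoly = X ^ (n - 1) * (X - 1) ∧
      (1 : Fin n → ZMod p) ᵥ* A = 1) := by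
  have hn0 : (n : ZMod p) ≠ 0 := by
    simpa [ZMod.natCast_eq_zero_iff] using hpn
  have hone_ne : (1 : Fin n → ZMod p) ≠ 0 := by
    intro h
    have := congrFun h ⟨0, hn⟩
    simp at this
  have hfr : Module.finrank (ZMod p) (Fin n → ZMod p) = n := by
    simp [Module.finrank_fintype_fun_eq_card]
  constructor
  · intro hcons
    choose Tf hTf using hcons
    set c : ZMod p := (n : ZMod p)⁻¹ with hc
    set T : ℕ := (Finset.univ.sup fun j : Fin n => Tf (Pi.single j 1)) + 1 with hTdef
    set Cm : Matrix (Fin n) (Fin n) (ZMod p) := Matrix.of (fun _ _ => c) with hCm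
    have hCT : ∀ t ≥ T, A ^ t = Cm := by
      intro t ht
      ext i j
      have hsup : Tf (Pi.single j 1) ≤ Finset.univ.sup fun j : Fin n => Tf (Pi.single j 1) :=
        Finset.le_sup (f := fun j : Fin n => Tf (Pi.single j 1)) (Finset.mem_univ j)
      have h1 := hTf (Pi.single j 1) t (by omega)
      have h2 := congrFun h1 i
      simpa [Matrix.mulVec, dotProduct, Pi.single_apply, Finset.sum_ite_eq,
        hCm] using h2
    have hstab : ∀ k ≥ T, A ^ k = A ^ T := by
      intro k hk; rw [hCT k hk, hCT T le_rfl]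
    have hCmA : Cm * A = Cm := by
      have h := (pow_succ A T).symm
      rw [hCT T le_rfl] at h
      rw [hCT (T + 1) (Nat.le_succ T)] at h
      exact h.symm ▸ h
    have honeCm : (1 : Fin n → ZMod p) ᵥ* Cm = 1 := by
      ext j
      simp only [Matrix.vecMul, dotProduct, hCm, Matrix.of_apply, Pi.one_apply,
        one_mul, Finset.sum_const, Finset.card_univ, Fintype.card_fin, nsmul_eq_mul]
      rw [hc, mul_inv_cancel₀ hn0]
    have hcol : (1 : Fin n → ZMod p) ᵥ* A = 1 := by
      calc (1 : Fin n → ZMod p) ᵥ* A = ((1 : Fin n → ZMod p) ᵥ* Cm) ᵥ* A := by rw [honeCm]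
        _ = (1 : Fin n → ZMod p) ᵥ* (Cm * A) := by rw [Matrix.vecMul_vecMul]
        _ = 1 := by rw [hCmA, honeCm]
    refine ⟨?_, hcol⟩
    -- range of toLin' (A ^ T) is span {1}
    have hrange : LinearMap.range (Matrix.toLin' (A ^ T))
        = Submodule.span (ZMod p) {(1 : Fin n → ZMod p)} := by
      apply le_antisymm
      · rintro y ⟨x, rfl⟩
        rw [Matrix.toLin'_apply, hCT T le_rfl, Submodule.mem_span_singleton]
        refine ⟨∑ j, c * x j, ?_⟩
        ext i
        simp [hCm, Matrix.mulVec, dotProduct]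
      · rw [Submodule.span_le, Set.singleton_subset_iff]
        refine ⟨1, ?_⟩
        rw [Matrix.toLin'_apply, hCT T le_rfl]
        ext i
        simp only [hCm, Matrix.mulVec, dotProduct, Matrix.of_apply, Pi.one_apply,
          mul_one, Finset.sum_const, Finset.card_univ, Fintype.card_fin, nsmul_eq_mul]
        rw [hc, mul_inv_cancel₀ hn0]
    have hrk : Module.finrank (ZMod p) (LinearMap.range (Matrix.toLin' (A ^ T))) = 1 := by
      rw [hrange, finrank_span_singleton hone_ne]
    have hrn := LinearMap.finrank_range_add_finrank_ker (Matrix.toLin' (A ^ T))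
    rw [hfr, hrk] at hrn
    have hker : Module.finrank (ZMod p) (LinearMap.ker (Matrix.toLin' (A ^ T))) = n - 1 := by
      omega
    have htd : natTrailingDegree A.charpoly = n - 1 := by
      rw [charpoly_toLin'',
        ← LinearMap.finrank_maxGenEigenspace_zero_eq
          (show Module.End (ZMod p) (Fin n → ZMod p) from Matrix.toLin' A),
        maxGen_eq_ker' A T hstab, hker]
    -- divisibility by X^(n-1)
    have hXdvd : (X : (ZMod p)[X]) ^ (n - 1) ∣ A.charpoly := by
      rw [Polynomial.X_pow_dvd_iff]
      intro d hd
      exact Polynomial.coeff_eq_zero_of_lt_natTrailingDegree (by omega)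
    -- divisibility by X - 1
    have heval : A.charpoly.eval 1 = 0 := by
      have hdet : A.charpoly.eval 1 = ((1 : Matrix (Fin n) (Fin n) (ZMod p)) - A).det := by
        rw [Matrix.charpoly, ← Polynomial.coe_evalRingHom, RingHom.map_det]
        congr 1
        ext i j
        by_cases h : i = j <;>
          simp [h, charmatrix_apply, Matrix.one_apply, Matrix.diagonal_apply]
      rw [hdet]
      rw [← Matrix.exists_mulVec_eq_zero_iff]
      exact ⟨1, hone_ne, by rw [Matrix.sub_mulVec, Matrix.one_mulVec, hA, sub_self]⟩
    have hX1dvd : (X - 1 : (ZMod p)[X]) ∣ A.charpoly := by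
      have := Polynomial.dvd_iff_isRoot.mpr heval
      rwa [Polynomial.C_1] at this
    have hcop : IsCoprime ((X : (ZMod p)[X]) ^ (n - 1)) (X - 1) :=
      IsCoprime.pow_left ⟨1, -1, by ring⟩
    obtain ⟨u, hu⟩ := hcop.mul_dvd hXdvd hX1dvd
    have hqmon : ((X : (ZMod p)[X]) ^ (n - 1) * (X - 1)).Monic := by
      have h1 : (X - 1 : (ZMod p)[X]) = X - C 1 := by rw [Polynomial.C_1]
      rw [h1]
      exact (monic_X_pow _).mul (monic_X_sub_C 1)
    have hcmon := A.charpoly_monic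
    have hu0 : u ≠ 0 := by
      rintro rfl
      rw [mul_zero] at hu
      exact hcmon.ne_zero hu
    have hdegc : A.charpoly.natDegree = n := by
      rw [A.charpoly_natDegree_eq_dim, Fintype.card_fin]
    have hdegq : ((X : (ZMod p)[X]) ^ (n - 1) * (X - 1)).natDegree = n := by
      have h1 : (X - 1 : (ZMod p)[X]) = X - C 1 := by rw [Polynomial.C_1]
      rw [h1, natDegree_mul (pow_ne_zero _ X_ne_zero) (X_sub_C_ne_zero 1),
        natDegree_X_pow, natDegree_X_sub_C]
      omega
    have hudeg : u.natDegree = 0 := by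
      have := congrArg natDegree hu
      rw [hdegc, natDegree_mul hqmon.ne_zero hu0, hdegq] at this
      omega
    have hulc : u.leadingCoeff = 1 := by
      have := congrArg leadingCoeff hu
      rw [hcmon.leadingCoeff, leadingCoeff_mul, hqmon.leadingCoeff, one_mul] at this
      exact this.symm
    have hu1 : u = 1 := by
      have := Polynomial.eq_C_of_natDegree_le_zero (le_of_eq hudeg)
      rw [this]
      rw [this, leadingCoeff_C] at hulc
      rw [hulc, Polynomial.C_1]
    rw [hu, hu1, mul_one]
  · rintro ⟨hchar, hcol⟩
    -- Cayley–Hamilton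
    have hCH := Matrix.aeval_self_charpoly A
    rw [hchar] at hCH
    have hCH' : A ^ (n - 1) * (A - 1) = 0 := by
      simpa only [_root_.map_mul, _root_.map_sub, map_pow, aeval_X, _root_.map_one] using hCH
    have hstep : A ^ (n - 1) * A = A ^ (n - 1) := by
      rw [mul_sub, mul_one, sub_eq_zero] at hCH'
      exact hCH'
    have hstab : ∀ k ≥ n - 1, A ^ k = A ^ (n - 1) := by
      intro k hk
      induction k, hk using Nat.le_induction with
      | base => rfl
      | succ k hk ih => rw [pow_succ, ih, hstep]
    -- dimension count
    have htd : natTrailingDegree A.charpoly = n - 1 := by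
      rw [hchar]
      have h1 : (X - 1 : (ZMod p)[X]) = X - C 1 := by rw [Polynomial.C_1]
      rw [h1, natTrailingDegree_mul (pow_ne_zero _ X_ne_zero) (X_sub_C_ne_zero 1),
        natTrailingDegree_X_pow]
      have h2 : (X - C (1 : ZMod p)).natTrailingDegree = 0 := by
        have : (X - C (1 : ZMod p)).coeff 0 ≠ 0 := by simp
        exact Nat.le_zero.mp (natTrailingDegree_le_of_ne_zero this)
      omega
    have hker : Module.finrank (ZMod p)
        (LinearMap.ker (Matrix.toLin' (A ^ (n - 1)))) = n - 1 := by
      rw [← maxGen_eq_ker' A (n - 1) hstab,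
        LinearMap.finrank_maxGenEigenspace_zero_eq
          (show Module.End (ZMod p) (Fin n → ZMod p) from Matrix.toLin' A),
        ← charpoly_toLin'', htd]
    have hrn := LinearMap.finrank_range_add_finrank_ker (Matrix.toLin' (A ^ (n - 1)))
    rw [hfr, hker] at hrn
    have hrk : Module.finrank (ZMod p)
        (LinearMap.range (Matrix.toLin' (A ^ (n - 1)))) ≤ 1 := by omega
    have hle : Submodule.span (ZMod p) {(1 : Fin n → ZMod p)}
        ≤ LinearMap.range (Matrix.toLin' (A ^ (n - 1))) := by
      rw [Submodule.span_le, Set.singleton_subset_iff]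
      exact ⟨1, by rw [Matrix.toLin'_apply, pow_mulVec_one' hA]⟩
    have hrange : Submodule.span (ZMod p) {(1 : Fin n → ZMod p)}
        = LinearMap.range (Matrix.toLin' (A ^ (n - 1))) := by
      apply Submodule.eq_of_le_of_finrank_le hle
      rw [finrank_span_singleton hone_ne]
      exact hrk
    have hcolpow := one_vecMul_pow' hcol (n - 1)
    intro x0
    refine ⟨n - 1, fun t ht => ?_⟩
    rw [hstab t ht]
    have hmem : A ^ (n - 1) *ᵥ x0 ∈ LinearMap.range (Matrix.toLin' (A ^ (n - 1))) :=
      ⟨x0, Matrix.toLin'_apply _ _⟩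
    rw [← hrange, Submodule.mem_span_singleton] at hmem
    obtain ⟨cc, hcc⟩ := hmem
    have hdot : (1 : Fin n → ZMod p) ⬝ᵥ (A ^ (n - 1) *ᵥ x0) = ∑ i, x0 i := by
      rw [Matrix.dotProduct_mulVec, hcolpow]
      simp [dotProduct]
    rw [← hcc] at hdot
    have hnc : (n : ZMod p) * cc = ∑ i, x0 i := by
      simpa [dotProduct, Finset.sum_const, Finset.card_univ, Fintype.card_fin,
        nsmul_eq_mul] using hdot
    have hcc' : cc = (n : ZMod p)⁻¹ * ∑ i, x0 i := by
      rw [← hnc, inv_mul_cancel_left₀ hn0]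
    rw [← hcc, hcc']
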